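/- With 𝐋(s) = 𝐀 − s𝐄 the linearization pencil of R(s) as above, every eigenvalue of R(s) is an eigenvalue of 𝐋(s): if R(λ)x = 0 for some x ≠ 0 with C₀+λC₁ invertible, then 𝐋(λ)·((1, λ, Φ(λ))ᵀ ⊗ x) = 0 and (1, λ, Φ(λ))ᵀ ⊗ x ≠ 0. -/
import Mathlib

open Matrix

private lemma row1_key {n d m : ℕ} (s : ℂ)
    (A0 A1 A2 : Matrix (Fin n) (Fin n) ℂ) (Am : Fin m → Matrix (Fin n) (Fin n) ℂ)
    (α : Fin m → ℂ) (a : Fin m → Fin d → ℂ)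
    (x : Fin n → ℂ) (Φ : Fin d → ℂ)
    (hR : (A0 + s • A1 + s ^ 2 • A2 + ∑ j, (α j + a j ⬝ᵥ Φ) • Am j).mulVec x = 0)
    (i : Fin n) :
      ((∑ i', ((A0 + ∑ j, α j • Am j) + s • A1) i i' * x i') +
        ((∑ i', (s • A2) i i' * (s * x i')) +
         ∑ p : Fin d × Fin n, (∑ j, a j p.1 * Am j i p.2) * (Φ p.1 * x p.2))) = 0 := by
  have h := congrFun hR i
  simp only [Matrix.mulVec, dotProduct, Pi.zero_apply, Matrix.add_apply,
    Matrix.smul_apply, Matrix.sum_apply, smul_eq_mul, Fintype.sum_prod_type] at h ⊢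
  rw [← h]
  rw [Finset.sum_comm]
  rw [← Finset.sum_add_distrib, ← Finset.sum_add_distrib]
  refine Finset.sum_congr rfl fun i' _ => ?_
  simp only [dotProduct, add_mul, Finset.sum_mul, Finset.mul_sum, Finset.sum_add_distrib, mul_add]
  have hsw : (∑ k : Fin d, ∑ j : Fin m, a j k * Am j i i' * (Φ k * x i')) =
      ∑ j : Fin m, ∑ k : Fin d, a j k * Am j i i' * (Φ k * x i') := Finset.sum_comm
  rw [hsw]
  have : ∀ j k, a j k * Am j i i' * (Φ k * x i') = a j k * Φ k * Am j i i' * x i' :=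
    fun j k => by ring
  simp only [this]
  ring

/-- Every eigenvalue of `R(s)` is an eigenvalue of the linearization `𝐋(s)`:
if `R(λ)x = 0` with `x ≠ 0` and `C₀+λC₁` invertible, then
`𝐋(λ)·((1,λ,Φ(λ))ᵀ ⊗ x) = 0` and the vector `(1,λ,Φ(λ))ᵀ ⊗ x` is nonzero. -/
theorem eigenvalue_of_R_is_eigenvalue_of_L {n d m : ℕ} (s : ℂ)
    (A0 A1 A2 : Matrix (Fin n) (Fin n) ℂ) (Am : Fin m → Matrix (Fin n) (Fin n) ℂ)
    (α : Fin m → ℂ) (a : Fin m → Fin d → ℂ)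
    (c0 c1 : Fin d → ℂ) (C0 C1 : Matrix (Fin d) (Fin d) ℂ)
    (hC : IsUnit (C0 + s • C1)) (x : Fin n → ℂ) (hx : x ≠ 0) :
    let Φ : Fin d → ℂ := -((C0 + s • C1)⁻¹.mulVec (c0 + s • c1))
    let R : Matrix (Fin n) (Fin n) ℂ :=
      A0 + s • A1 + s ^ 2 • A2 + ∑ j, (α j + a j ⬝ᵥ Φ) • Am j
    let At0 : Matrix (Fin n) (Fin n) ℂ := A0 + ∑ j, α j • Am j
    let L : Matrix (Fin n ⊕ (Fin n ⊕ Fin d × Fin n))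
        (Fin n ⊕ (Fin n ⊕ Fin d × Fin n)) ℂ :=
      Matrix.of fun r c =>
        match r, c with
        | Sum.inl i, Sum.inl i' => (At0 + s • A1) i i'
        | Sum.inl i, Sum.inr (Sum.inl i') => (s • A2) i i'
        | Sum.inl i, Sum.inr (Sum.inr ki') => ∑ j, a j ki'.1 * Am j i ki'.2
        | Sum.inr (Sum.inl i), Sum.inl i' => s * (if i = i' then 1 else 0)
        | Sum.inr (Sum.inl i), Sum.inr (Sum.inl i') => -(if i = i' then 1 else 0)
        | Sum.inr (Sum.inl _), Sum.inr (Sum.inr _) => 0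
        | Sum.inr (Sum.inr ki), Sum.inl i' =>
            (c0 ki.1 + s * c1 ki.1) * (if ki.2 = i' then 1 else 0)
        | Sum.inr (Sum.inr _), Sum.inr (Sum.inl _) => 0
        | Sum.inr (Sum.inr ki), Sum.inr (Sum.inr li') =>
            (C0 ki.1 li'.1 + s * C1 ki.1 li'.1) * (if ki.2 = li'.2 then 1 else 0)
    R.mulVec x = 0 →
    (L.mulVec (Sum.elim x (Sum.elim (fun i => s * x i)
        (fun ki => Φ ki.1 * x ki.2))) = 0 ∧
      Sum.elim x (Sum.elim (fun i : Fin n => s * x i)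
        (fun ki : Fin d × Fin n => Φ ki.1 * x ki.2)) ≠ 0) := by
  intro Φ R At0 L hR
  have hinv : (C0 + s • C1).mulVec Φ = -(c0 + s • c1) := by
    have hd := (Matrix.isUnit_iff_isUnit_det _).mp hC
    show (C0 + s • C1).mulVec (-((C0 + s • C1)⁻¹.mulVec (c0 + s • c1))) = _
    rw [Matrix.mulVec_neg, Matrix.mulVec_mulVec, Matrix.mul_nonsing_inv _ hd,
      Matrix.one_mulVec]
  constructor
  · funext r
    show ∑ c, L r c * Sum.elim x (Sum.elim (fun i => s * x i)
        (fun ki => Φ ki.1 * x ki.2)) c = 0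
    cases r with
    | inl i =>
      simp only [Fintype.sum_sum_type, L, Matrix.of_apply, Sum.elim_inl, Sum.elim_inr]
      exact row1_key s A0 A1 A2 Am α a x Φ hR i
    | inr r =>
      cases r with
      | inl i =>
        simp only [Fintype.sum_sum_type, L, Matrix.of_apply, Sum.elim_inl, Sum.elim_inr,
          mul_ite, mul_one, mul_zero, ite_mul, zero_mul, neg_mul, one_mul,
          neg_zero, Finset.sum_ite_eq, Finset.mem_univ, if_true,
          Finset.sum_const_zero, add_zero, Finset.sum_neg_distrib]
        ring_nf
      | inr ki =>
        obtain ⟨k, i⟩ := ki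
        have hk := congrFun hinv k
        simp only [Matrix.mulVec, dotProduct, Matrix.add_apply, Matrix.smul_apply,
          smul_eq_mul, Pi.neg_apply, Pi.add_apply, Pi.smul_apply] at hk
        simp only [Fintype.sum_sum_type, Fintype.sum_prod_type, L, Matrix.of_apply,
          Sum.elim_inl, Sum.elim_inr, mul_ite, mul_one, mul_zero, ite_mul, zero_mul,
          Finset.sum_ite_eq, Finset.mem_univ, if_true, Finset.sum_const_zero,
          zero_add, add_zero]
        have : (∑ l : Fin d, (C0 k l + s * C1 k l) * (Φ l * x i)) =
            (∑ l : Fin d, (C0 k l + s * C1 k l) * Φ l) * x i := by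
          rw [Finset.sum_mul]; exact Finset.sum_congr rfl fun l _ => by ring
        rw [this, hk]
        ring
  · obtain ⟨i, hi⟩ := Function.ne_iff.mp hx
    intro hz
    exact hi (by simpa using congrFun hz (Sum.inl i))
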